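/- Let ψ : ℂ → ℂ be a homeomorphism of the plane and let V ⊆ ℂ be a domain (a nonempty open connected set). Then ψ(T(V)) = T(ψ(V)). -/

import Mathlib

/-- `T(V)`: the union of `V` with all bounded connected components of `ℂ \ V`
(the topological hull of `V`). -/
def hullT (V : Set ℂ) : Set ℂ :=
  V ∪ {z | z ∉ V ∧ Bornology.IsBounded (connectedComponentIn Vᶜ z)}

lemma isBounded_image_homeo (ψ : ℂ ≃ₜ ℂ) {S : Set ℂ}
    (h : Bornology.IsBounded S) : Bornology.IsBounded (ψ '' S) :=
  ((h.isCompact_closure.image ψ.continuous).isBounded).subset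
    (Set.image_mono subset_closure)

theorem image_hullT_eq_hullT_image (ψ : ℂ ≃ₜ ℂ) (V : Set ℂ)
    (hV : IsOpen V) (hVc : IsConnected V) :
    ψ '' hullT V = hullT (ψ '' V) := by
  ext w
  have hsymm : ψ (ψ.symm w) = w := ψ.apply_symm_apply w
  have hmem : w ∈ ψ '' hullT V ↔ ψ.symm w ∈ hullT V := by
    constructor
    · rintro ⟨z, hz, rfl⟩; simpa using hz
    · intro h; exact ⟨ψ.symm w, h, hsymm⟩
  have hmemV : w ∈ ψ '' V ↔ ψ.symm w ∈ V := by
    constructor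
    · rintro ⟨z, hz, rfl⟩; simpa using hz
    · intro h; exact ⟨ψ.symm w, h, hsymm⟩
  rw [hmem]
  unfold hullT
  simp only [Set.mem_union, Set.mem_setOf_eq, hmemV]
  constructor
  · rintro (h | ⟨h1, h2⟩)
    · exact Or.inl h
    · refine Or.inr ⟨h1, ?_⟩
      have him : ψ '' connectedComponentIn Vᶜ (ψ.symm w)
          = connectedComponentIn (ψ '' V)ᶜ w := by
        rw [ψ.image_connectedComponentIn h1, Set.image_compl_eq ψ.bijective, hsymm]
      rw [← him]
      exact isBounded_image_homeo ψ h2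
  · rintro (h | ⟨h1, h2⟩)
    · exact Or.inl h
    · refine Or.inr ⟨h1, ?_⟩
      have h1' : w ∈ (ψ '' V)ᶜ := fun hw => h1 (hmemV.mp hw)
      have him : ψ.symm '' connectedComponentIn (ψ '' V)ᶜ w
          = connectedComponentIn Vᶜ (ψ.symm w) := by
        rw [ψ.symm.image_connectedComponentIn h1',
          Set.image_compl_eq ψ.symm.bijective]
        rw [show ψ.symm '' (ψ '' V) = V from ψ.symm_image_image V]
      rw [← him]
      exact isBounded_image_homeo ψ.symm h2
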